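/- arXiv:0909.1854 — 3 statements merged into one kernel-verified Lean document; each statement's English description precedes it below -/
import Mathlib

section
/- Let T_{12|34}, T_{13|24}, T_{14|23} be the three binary trees on Fin 4 whose unique nontrivial splits are {1,2}, {1,3}, {1,4} respectively, and consider the Kimura 2-parameter Fourier parameterization. Define the linear form f(q) = q_{(G,G,G,G)} + q_{(G,T,G,T)} − q_{(G,G,T,T)} − q_{(G,T,T,G)} on ℂ^{G^4}, where A=(0,0), C=(0,1), G=(1,0), T=(1,1). Then: (i) for all K2P parameters s1 on T_{12|34}, s2 on T_{14|23}, and all π ∈ ℂ, f(π·ψ_{T_{12|34}}(s1) + (1−π)·ψ_{T_{14|23}}(s2)) = 0; and (ii) there exist K2P parameters s (which may even be taken with c_e = t_e for every split e, i.e. Jukes–Cantor parameters) such that f(ψ_{T_{13|24}}(s)) ≠ 0. -/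
open scoped BigOperators

/-- The group `G = ℤ/2 × ℤ/2` used for 4-state group-based models. -/
abbrev Gp : Type := (ZMod 2) × (ZMod 2)

/-- A split (subset of the taxa `Fin n`) is nontrivial if `2 ≤ |A| ≤ n - 2`. -/
def Split.Nontriv {n : ℕ} (A : Finset (Fin n)) : Prop :=
  2 ≤ A.card ∧ A.card ≤ n - 2

/-- Two splits are compatible if one of the four mutual intersections is empty. -/
def Split.Compat {n : ℕ} (A B : Finset (Fin n)) : Prop :=
  A ∩ B = ∅ ∨ A ∩ Bᶜ = ∅ ∨ Aᶜ ∩ B = ∅ ∨ Aᶜ ∩ Bᶜ = ∅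

instance {n : ℕ} (A : Finset (Fin n)) : Decidable (Split.Nontriv A) := by
  unfold Split.Nontriv; infer_instance

instance {n : ℕ} (A B : Finset (Fin n)) : Decidable (Split.Compat A B) := by
  unfold Split.Compat; infer_instance

/-- A binary tree on the taxa `Fin n`, encoded by its set `Σ(T)` of `n - 3` pairwise
compatible nontrivial splits, no two of which are equal or complementary. -/
structure PhyloBinaryTree (n : ℕ) where
  splits : Finset (Finset (Fin n))
  card_splits : splits.card = n - 3
  nontriv : ∀ A ∈ splits, Split.Nontriv A
  compat : ∀ A ∈ splits, ∀ B ∈ splits, Split.Compat A B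
  not_compl : ∀ A ∈ splits, ∀ B ∈ splits, A ≠ B → A ≠ Bᶜ

/-- The full split set `Σ*(T)`: the nontrivial splits together with the `n` trivial splits. -/
def fullSplits {n : ℕ} (T : PhyloBinaryTree n) : Finset (Finset (Fin n)) :=
  T.splits ∪ Finset.univ.image (fun i : Fin n => ({i} : Finset (Fin n)))

/-- Two split systems agree up to complementation of individual splits. -/
def sameSplits {n : ℕ} (s t : Finset (Finset (Fin n))) : Prop :=
  ∀ A : Finset (Fin n), (A ∈ s ∨ Aᶜ ∈ s) ↔ (A ∈ t ∨ Aᶜ ∈ t)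

/-- Equality of binary trees: split sets agree up to complementation of individual splits. -/
def sameTree {n : ℕ} (T1 T2 : PhyloBinaryTree n) : Prop :=
  sameSplits T1.splits T2.splits

/-- The Jukes–Cantor Fourier parameterization of the tree `T`. -/
noncomputable def psiJC {n : ℕ} (T : PhyloBinaryTree n) (a : ↥(fullSplits T) → ℂ) :
    (Fin n → Gp) → ℂ := fun g =>
  if (∑ i, g i) = 0 then
    ∏ e : ↥(fullSplits T), (if (∑ i ∈ (e : Finset (Fin n)), g i) = 0 then 1 else a e)
  else 0

/-- The 2-tree mixture parameterization for the Jukes–Cantor model. -/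
noncomputable def psiMixJC {n : ℕ} (T1 T2 : PhyloBinaryTree n)
    (a : ↥(fullSplits T1) → ℂ) (b : ↥(fullSplits T2) → ℂ) (pi : ℂ) :
    (Fin n → Gp) → ℂ := fun g =>
  pi * psiJC T1 a g + (1 - pi) * psiJC T2 b g

/-- The factor contributed by a single split in the K2P Fourier parameterization:
`1` for group element `A = (0,0)`, `c_e` for `C = (0,1)`, `t_e` for `G = (1,0)` or `T = (1,1)`. -/
def k2pFactor (p : ℂ × ℂ) (h : Gp) : ℂ :=
  if h = ((0 : ZMod 2), (0 : ZMod 2)) then 1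
  else if h = ((0 : ZMod 2), (1 : ZMod 2)) then p.1
  else p.2

/-- The Kimura 2-parameter Fourier parameterization of the tree `T`; the parameter of
split `e` is a pair `(c_e, t_e)`. -/
noncomputable def psiK2P {n : ℕ} (T : PhyloBinaryTree n) (s : ↥(fullSplits T) → ℂ × ℂ) :
    (Fin n → Gp) → ℂ := fun g =>
  if (∑ i, g i) = 0 then
    ∏ e : ↥(fullSplits T), k2pFactor (s e) (∑ i ∈ (e : Finset (Fin n)), g i)
  else 0

/-- The 2-tree mixture parameterization for the K2P model. -/
noncomputable def psiMixK2P {n : ℕ} (T1 T2 : PhyloBinaryTree n)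
    (s1 : ↥(fullSplits T1) → ℂ × ℂ) (s2 : ↥(fullSplits T2) → ℂ × ℂ) (pi : ℂ) :
    (Fin n → Gp) → ℂ := fun g =>
  pi * psiK2P T1 s1 g + (1 - pi) * psiK2P T2 s2 g

/-- The group elements `G = (1,0)` and `T = (1,1)` of `ℤ/2 × ℤ/2`. -/
def gG : Gp := ((1 : ZMod 2), (0 : ZMod 2))
def gT : Gp := ((1 : ZMod 2), (1 : ZMod 2))

/-- The quartet tree `T_{12|34}` (taxa `1,2,3,4` identified with `0,1,2,3 : Fin 4`). -/
def T12_34 : PhyloBinaryTree 4 :=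
  ⟨{({0, 1} : Finset (Fin 4))}, by decide, by decide, by decide, by decide⟩

/-- The quartet tree `T_{13|24}`. -/
def T13_24 : PhyloBinaryTree 4 :=
  ⟨{({0, 2} : Finset (Fin 4))}, by decide, by decide, by decide, by decide⟩

/-- The quartet tree `T_{14|23}`. -/
def T14_23 : PhyloBinaryTree 4 :=
  ⟨{({0, 3} : Finset (Fin 4))}, by decide, by decide, by decide, by decide⟩

/-- The linear form `f(q) = q_{GGGG} + q_{GTGT} − q_{GGTT} − q_{GTTG}`. -/
noncomputable def linformQuartet (q : (Fin 4 → Gp) → ℂ) : ℂ :=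
  q ![gG, gG, gG, gG] + q ![gG, gT, gG, gT] - q ![gG, gG, gT, gT] - q ![gG, gT, gT, gG]

/-- Class of a group element: `0` for `A`, `1` for `C`, `2` for `G`/`T`. -/
def gcls (h : Gp) : ℕ :=
  if h = ((0 : ZMod 2), (0 : ZMod 2)) then 0
  else if h = ((0 : ZMod 2), (1 : ZMod 2)) then 1 else 2

lemma k2pFactor_eq_of_gcls (p : ℂ × ℂ) {h1 h2 : Gp} (h : gcls h1 = gcls h2) :
    k2pFactor p h1 = k2pFactor p h2 := by
  unfold gcls at h
  unfold k2pFactor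
  split_ifs at h ⊢ <;> simp_all

lemma psiK2P_congr {n : ℕ} (T : PhyloBinaryTree n) (s : ↥(fullSplits T) → ℂ × ℂ)
    (g1 g2 : Fin n → Gp) (h0 : ∑ i, g1 i = 0) (h0' : ∑ i, g2 i = 0)
    (h : ∀ e : ↥(fullSplits T),
      gcls (∑ i ∈ (e : Finset (Fin n)), g1 i) = gcls (∑ i ∈ (e : Finset (Fin n)), g2 i)) :
    psiK2P T s g1 = psiK2P T s g2 := by
  unfold psiK2P
  rw [if_pos h0, if_pos h0']
  exact Finset.prod_congr rfl (fun e _ => k2pFactor_eq_of_gcls _ (h e))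

lemma k2pFactor_neg (h : Gp) :
    k2pFactor (-1, -1) h = (if h = 0 then 1 else -1 : ℂ) := by
  unfold k2pFactor
  split_ifs <;> simp_all [Prod.ext_iff]

lemma psiK2P_neg_val {n : ℕ} (T : PhyloBinaryTree n) (g : Fin n → Gp) (h0 : ∑ i, g i = 0) :
    psiK2P T (fun _ => (-1, -1)) g =
      ((∏ e : ↥(fullSplits T),
        (if (∑ i ∈ (e : Finset (Fin n)), g i) = 0 then 1 else -1 : ℤ)) : ℂ) := by
  unfold psiK2P
  rw [if_pos h0]
  push_cast
  exact Finset.prod_congr rfl (fun e _ => k2pFactor_neg _)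

/-- the linear form `f` vanishes on the whole image of the K2P mixture
parameterization on `(T_{12|34}, T_{14|23})`, but does not vanish identically on the K2P
(indeed Jukes–Cantor) model on `T_{13|24}`. -/
theorem quartet_linear_invariant :
    (∀ (s1 : ↥(fullSplits T12_34) → ℂ × ℂ) (s2 : ↥(fullSplits T14_23) → ℂ × ℂ) (pi : ℂ),
      linformQuartet (psiMixK2P T12_34 T14_23 s1 s2 pi) = 0) ∧
    (∃ s : ↥(fullSplits T13_24) → ℂ × ℂ,
      (∀ e, (s e).1 = (s e).2) ∧ linformQuartet (psiK2P T13_24 s) ≠ 0) := by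
  constructor
  · intro s1 s2 pi
    have e1 : psiK2P T12_34 s1 ![gG, gG, gG, gG] = psiK2P T12_34 s1 ![gG, gG, gT, gT] :=
      psiK2P_congr _ _ _ _ (by decide) (by decide) (by decide)
    have e2 : psiK2P T12_34 s1 ![gG, gT, gG, gT] = psiK2P T12_34 s1 ![gG, gT, gT, gG] :=
      psiK2P_congr _ _ _ _ (by decide) (by decide) (by decide)
    have e3 : psiK2P T14_23 s2 ![gG, gG, gG, gG] = psiK2P T14_23 s2 ![gG, gT, gT, gG] :=
      psiK2P_congr _ _ _ _ (by decide) (by decide) (by decide)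
    have e4 : psiK2P T14_23 s2 ![gG, gT, gG, gT] = psiK2P T14_23 s2 ![gG, gG, gT, gT] :=
      psiK2P_congr _ _ _ _ (by decide) (by decide) (by decide)
    unfold linformQuartet psiMixK2P
    rw [e1, e2, e3, e4]
    ring
  · refine ⟨fun _ => (-1, -1), fun e => rfl, ?_⟩
    unfold linformQuartet
    rw [psiK2P_neg_val _ _ (by decide), psiK2P_neg_val _ _ (by decide),
        psiK2P_neg_val _ _ (by decide), psiK2P_neg_val _ _ (by decide)]
    norm_cast
end

section
/- Let T1, T2, T3, T4 be binary trees on Fin 5 (not necessarily distinct). If the pairs (T1, T2) and (T3, T4) are quartet-matched, then {T1, T2} = {T3, T4} as unordered pairs, i.e. either (T1 = T3 and T2 = T4) or (T1 = T4 and T2 = T3). -/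
open scoped BigOperators

/-- The quartet tree induced by `T` on a 4-element subset `Q` of the taxa: the set of
2-element subsets `P` of `Q` cut out by a split of `T` restricting to a `2|2`-partition
of `Q` as `P` or its relative complement. -/
def quartet {n : ℕ} (T : PhyloBinaryTree n) (Q : Finset (Fin n)) : Set (Finset (Fin n)) :=
  {P | ∃ A ∈ fullSplits T, (A ∩ Q = P ∨ Aᶜ ∩ Q = P) ∧ (A ∩ Q).card = 2 ∧ (Aᶜ ∩ Q).card = 2}

/-- Two pairs of trees are quartet-matched if they induce the same pair of quartet trees
on every 4-element subset of the taxa. -/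
def quartetMatched {n : ℕ} (T1 T2 T3 T4 : PhyloBinaryTree n) : Prop :=
  ∀ Q : Finset (Fin n), Q.card = 4 →
    ((quartet T1 Q = quartet T3 Q ∧ quartet T2 Q = quartet T4 Q) ∨
     (quartet T1 Q = quartet T4 Q ∧ quartet T2 Q = quartet T3 Q))


/-! ### Auxiliary machinery for the proof -/

def trivialsAux (n : ℕ) : Finset (Finset (Fin n)) :=
  Finset.univ.image fun i => ({i} : Finset (Fin n))

def quartetD {n : ℕ} (s : Finset (Finset (Fin n))) (Q : Finset (Fin n)) :
    Finset (Finset (Fin n)) :=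
  Finset.univ.filter (fun P => ∃ A ∈ s ∪ trivialsAux n,
    (A ∩ Q = P ∨ Aᶜ ∩ Q = P) ∧ (A ∩ Q).card = 2 ∧ (Aᶜ ∩ Q).card = 2)

instance {n : ℕ} (s t : Finset (Finset (Fin n))) : Decidable (sameSplits s t) := by
  unfold sameSplits; infer_instance

lemma quartet_eq_coe {n : ℕ} (T : PhyloBinaryTree n) (Q : Finset (Fin n)) :
    quartet T Q = ↑(quartetD T.splits Q) := by
  ext P
  simp [quartet, quartetD, fullSplits, trivialsAux]

lemma sameSplits_refl {n : ℕ} (s : Finset (Finset (Fin n))) : sameSplits s s :=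
  fun _ => Iff.rfl

lemma sameSplits_symm {n : ℕ} {s t : Finset (Finset (Fin n))} (h : sameSplits s t) :
    sameSplits t s := fun A => (h A).symm

lemma sameSplits_trans {n : ℕ} {s t u : Finset (Finset (Fin n))}
    (h1 : sameSplits s t) (h2 : sameSplits t u) : sameSplits s u :=
  fun A => (h1 A).trans (h2 A)

lemma qd_congr {n : ℕ} {s t : Finset (Finset (Fin n))} (h : sameSplits s t)
    (Q : Finset (Fin n)) : quartetD s Q = quartetD t Q := by
  have main : ∀ (s t : Finset (Finset (Fin n))), sameSplits s t → ∀ P,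
      P ∈ quartetD s Q → P ∈ quartetD t Q := by
    intro s t hst P hP
    simp only [quartetD, Finset.mem_filter, Finset.mem_univ, true_and,
      Finset.mem_union] at hP ⊢
    obtain ⟨A, hA | hA, hc⟩ := hP
    · rcases (hst A).mp (Or.inl hA) with hAt | hAt
      · exact ⟨A, Or.inl hAt, hc⟩
      · refine ⟨Aᶜ, Or.inl hAt, ?_⟩
        rw [compl_compl]
        exact ⟨hc.1.symm, hc.2.2, hc.2.1⟩
    · exact ⟨A, Or.inr hA, hc⟩
  ext P
  exact ⟨main s t h P, main t s (sameSplits_symm h) P⟩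

/-- The 15 binary trees on 5 taxa, in normalized form (two disjoint cherries). -/
def Lf : Fin 15 → Finset (Finset (Fin 5)) :=
  ![{{2,3},{1,4}}, {{2,3},{0,4}}, {{1,3},{2,4}}, {{1,3},{0,4}}, {{1,2},{3,4}},
   {{1,2},{0,4}}, {{1,2},{0,3}}, {{0,3},{2,4}}, {{0,3},{1,4}}, {{0,2},{3,4}},
   {{0,2},{1,4}}, {{0,2},{1,3}}, {{0,1},{3,4}}, {{0,1},{2,4}}, {{0,1},{2,3}}]

def mnAux (x : Fin 5) : Fin 5 := if x = 0 then 1 else 0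

def encAux (P : Finset (Fin 5)) : ℕ := P.sum (fun i => 2^i.1)

/-- A numerical code for the quartet tree induced on `univ.erase x`. -/
def qcode (s : Finset (Finset (Fin 5))) (x : Fin 5) : ℕ :=
  (quartetD s (Finset.univ.erase x)).sum (fun P => if mnAux x ∈ P then encAux P else 0)

def bigN : ℕ := 7448517698163092518189540214399181192701649699799766522658661167610474339587055364850697855251083225256663623218

def tab (i : Fin 15) (x : Fin 5) : ℕ := (bigN / 32^(5*i.1+x.1)) % 32

def nrm2 (A : Finset (Fin 5)) : Finset (Fin 5) := if A.card = 2 then A else Aᶜ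

set_option maxRecDepth 1000000 in
set_option maxHeartbeats 16000000 in
theorem normDec : ∀ A B : Finset (Fin 5),
    (Split.Nontriv A ∧ Split.Nontriv B ∧ Split.Compat A B ∧ A ≠ B ∧ A ≠ Bᶜ) →
    (sameSplits {A, B} {nrm2 A, nrm2 B} ∧
      ∃ i : Fin 15, ({nrm2 A, nrm2 B} : Finset (Finset (Fin 5))) = Lf i) := by decide

set_option maxRecDepth 1000000 in
set_option maxHeartbeats 16000000 in
theorem bridge : ∀ (i : Fin 15) (x : Fin 5), qcode (Lf i) x = tab i x := by
  intro i x
  fin_cases i <;> fin_cases x <;> decide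

set_option maxRecDepth 1000000 in
set_option maxHeartbeats 64000000 in
theorem finalDec : ∀ i1 i2 i3 i4 : Fin 15,
    (∀ x : Fin 5, (tab i1 x = tab i3 x ∧ tab i2 x = tab i4 x) ∨
                  (tab i1 x = tab i4 x ∧ tab i2 x = tab i3 x)) →
    ((i1 = i3 ∧ i2 = i4) ∨ (i1 = i4 ∧ i2 = i3)) := by decide

lemma normalizeTree (T : PhyloBinaryTree 5) : ∃ i : Fin 15, sameSplits T.splits (Lf i) := by
  have hc : T.splits.card = 2 := T.card_splits
  obtain ⟨A, B, hAB, hs⟩ := Finset.card_eq_two.mp hc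
  have hA : A ∈ T.splits := by rw [hs]; simp
  have hB : B ∈ T.splits := by rw [hs]; simp
  obtain ⟨hsame, i, hi⟩ := normDec A B
    ⟨T.nontriv A hA, T.nontriv B hB, T.compat A hA B hB, hAB, T.not_compl A hA B hB hAB⟩
  refine ⟨i, ?_⟩
  rw [hs, ← hi]
  exact hsame

lemma card_four_erase {Q : Finset (Fin 5)} (hQ : Q.card = 4) :
    ∃ x : Fin 5, Q = Finset.univ.erase x := by
  have h1 : Qᶜ.card = 1 := by
    rw [Finset.card_compl, hQ, Fintype.card_fin]
  obtain ⟨x, hx⟩ := Finset.card_eq_one.mp h1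
  refine ⟨x, ?_⟩
  have : Qᶜᶜ = ({x} : Finset (Fin 5))ᶜ := by rw [hx]
  rw [compl_compl] at this
  rw [this, Finset.compl_singleton]

lemma quartet_to_tab {x : Fin 5} {T T' : PhyloBinaryTree 5} {i i' : Fin 15}
    (hs : sameSplits T.splits (Lf i)) (hs' : sameSplits T'.splits (Lf i'))
    (hq : quartet T (Finset.univ.erase x) = quartet T' (Finset.univ.erase x)) :
    tab i x = tab i' x := by
  have e1 : quartetD T.splits (Finset.univ.erase x)
      = quartetD T'.splits (Finset.univ.erase x) := by
    apply Finset.coe_inj.mp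
    rw [← quartet_eq_coe, ← quartet_eq_coe, hq]
  have e2 : quartetD (Lf i) (Finset.univ.erase x)
      = quartetD (Lf i') (Finset.univ.erase x) := by
    rw [← qd_congr hs, ← qd_congr hs', e1]
  have e3 : qcode (Lf i) x = qcode (Lf i') x := by
    unfold qcode
    rw [e2]
  rw [← bridge i x, ← bridge i' x]
  exact e3

/-- on 5 taxa, quartet-matched pairs of binary trees are equal as
unordered pairs (tree equality being up to complementation of splits). -/
theorem quartet_matched_five_taxa (T1 T2 T3 T4 : PhyloBinaryTree 5)
    (h : quartetMatched T1 T2 T3 T4) :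
    (sameTree T1 T3 ∧ sameTree T2 T4) ∨ (sameTree T1 T4 ∧ sameTree T2 T3) := by
  obtain ⟨i1, h1⟩ := normalizeTree T1
  obtain ⟨i2, h2⟩ := normalizeTree T2
  obtain ⟨i3, h3⟩ := normalizeTree T3
  obtain ⟨i4, h4⟩ := normalizeTree T4
  have key : ∀ x : Fin 5, (tab i1 x = tab i3 x ∧ tab i2 x = tab i4 x) ∨
      (tab i1 x = tab i4 x ∧ tab i2 x = tab i3 x) := by
    intro x
    have hQ4 : (Finset.univ.erase x).card = 4 := by
      rw [Finset.card_erase_of_mem (Finset.mem_univ x), Finset.card_univ, Fintype.card_fin]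
    rcases h (Finset.univ.erase x) hQ4 with ⟨e13, e24⟩ | ⟨e14, e23⟩
    · exact Or.inl ⟨quartet_to_tab h1 h3 e13, quartet_to_tab h2 h4 e24⟩
    · exact Or.inr ⟨quartet_to_tab h1 h4 e14, quartet_to_tab h2 h3 e23⟩
  rcases finalDec i1 i2 i3 i4 key with ⟨e13, e24⟩ | ⟨e14, e23⟩
  · refine Or.inl ⟨?_, ?_⟩
    · show sameSplits T1.splits T3.splits
      refine sameSplits_trans h1 ?_
      rw [e13]
      exact sameSplits_symm h3
    · show sameSplits T2.splits T4.splits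
      refine sameSplits_trans h2 ?_
      rw [e24]
      exact sameSplits_symm h4
  · refine Or.inr ⟨?_, ?_⟩
    · show sameSplits T1.splits T4.splits
      refine sameSplits_trans h1 ?_
      rw [e14]
      exact sameSplits_symm h4
    · show sameSplits T2.splits T3.splits
      refine sameSplits_trans h2 ?_
      rw [e23]
      exact sameSplits_symm h3
end

section
/- Let T1, T2, T3 be binary trees on Fin n, n ≥ 4. Suppose there is a 4-element subset Q ⊆ Fin n such that the induced quartet tree T3|_Q is equal to neither T1|_Q nor T2|_Q. Then for the Jukes–Cantor model, the image of ψ_{T3} is not contained in the Zariski closure of the image of the mixture parameterization ψ_{T1,T2}; that is, there exist JC parameters s on T3 and a polynomial f vanishing on the entire image of ψ_{T1,T2} with f(ψ_{T3}(s)) ≠ 0. (Equivalently, V_{T3} ⊄ V_{T1} ∗ V_{T2}.) -/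
open scoped BigOperators

section Laminar
variable {α : Type*} [DecidableEq α]

lemma contract_step (M : Finset α) (F : Finset (Finset α)) (A : Finset α) (a : α)
    (hsub : ∀ X ∈ F, X ⊆ M) (hsz : ∀ X ∈ F, 2 ≤ X.card) (hpr : ∀ X ∈ F, X ≠ M)
    (hlam : ∀ X ∈ F, ∀ Y ∈ F, X ∩ Y = ∅ ∨ X ⊆ Y ∨ Y ⊆ X)
    (hAF : A ∈ F) (hmin : ∀ B ∈ F, A.card ≤ B.card) (ha : a ∈ A) :
    ∃ (M' : Finset α) (G : Finset (Finset α)),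
      M'.card + A.card = M.card + 1 ∧ G.card + 1 = F.card ∧
      (∀ X ∈ G, X ⊆ M') ∧ (∀ X ∈ G, 2 ≤ X.card) ∧ (∀ X ∈ G, X ≠ M') ∧
      (∀ X ∈ G, ∀ Y ∈ G, X ∩ Y = ∅ ∨ X ⊆ Y ∨ Y ⊆ X) := by
  classical
  have hAM : A ⊆ M := hsub A hAF
  have key : ∀ B ∈ F, B ≠ A → A ⊆ B ∨ A ∩ B = ∅ := by
    intro B hB hne
    rcases hlam A hAF B hB with h | h | h
    · exact Or.inr h
    · exact Or.inl h
    · exact absurd (Finset.eq_of_subset_of_card_le h (hmin B hB)) hne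
  set c : Finset α → Finset α := fun B => if A ⊆ B then insert a (B \ A) else B with hc
  set M' : Finset α := insert a (M \ A) with hM'
  set G : Finset (Finset α) := (F.erase A).image c with hG
  have haMA : a ∉ M \ A := fun h => (Finset.mem_sdiff.mp h).2 ha
  have hM'card : M'.card + A.card = M.card + 1 := by
    rw [hM', Finset.card_insert_of_notMem haMA, Finset.card_sdiff_of_subset hAM]
    have := Finset.card_le_card hAM
    omega
  have hmem : ∀ B ∈ F.erase A, (A ⊆ B ∧ B ≠ A) ∨ A ∩ B = ∅ := by
    intro B hB
    have hBF := Finset.mem_of_mem_erase hB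
    have hBne := Finset.ne_of_mem_erase hB
    rcases key B hBF hBne with h | h
    · exact Or.inl ⟨h, hBne⟩
    · exact Or.inr h
  have hdisj_notsub : ∀ B, A ∩ B = ∅ → ¬ A ⊆ B := by
    intro B h hs
    have := Finset.mem_inter.mpr ⟨ha, hs ha⟩; rw [h] at this; simp at this
  have hcsub : ∀ B ∈ F.erase A, c B ⊆ M' := by
    intro B hB
    have hBF := Finset.mem_of_mem_erase hB
    rcases hmem B hB with ⟨h, _⟩ | h
    · rw [hc]; simp only [if_pos h]
      exact Finset.insert_subset_insert a (Finset.sdiff_subset_sdiff (hsub B hBF) le_rfl)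
    · rw [hc]; simp only [if_neg (hdisj_notsub B h)]
      refine (Finset.subset_sdiff.mpr ⟨hsub B hBF, ?_⟩).trans (Finset.subset_insert _ _)
      rw [Finset.disjoint_iff_inter_eq_empty, Finset.inter_comm]; exact h
  have hcsz : ∀ B ∈ F.erase A, 2 ≤ (c B).card := by
    intro B hB
    have hBF := Finset.mem_of_mem_erase hB
    rcases hmem B hB with ⟨h, hne⟩ | h
    · rw [hc]; simp only [if_pos h]
      have hss : A ⊂ B := Finset.ssubset_iff_subset_ne.mpr ⟨h, fun e => hne e.symm⟩
      have h1 : A.card < B.card := Finset.card_lt_card hss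
      have h2 : a ∉ B \ A := fun hh => (Finset.mem_sdiff.mp hh).2 ha
      rw [Finset.card_insert_of_notMem h2, Finset.card_sdiff_of_subset h]
      have := hsz A hAF
      omega
    · rw [hc]; simp only [if_neg (hdisj_notsub B h)]; exact hsz B hBF
  have hcpr : ∀ B ∈ F.erase A, c B ≠ M' := by
    intro B hB
    have hBF := Finset.mem_of_mem_erase hB
    rcases hmem B hB with ⟨h, _⟩ | h
    · rw [hc]; simp only [if_pos h]
      have hssM : B ⊂ M := Finset.ssubset_iff_subset_ne.mpr ⟨hsub B hBF, hpr B hBF⟩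
      obtain ⟨z, hzM, hzB⟩ := Finset.exists_of_ssubset hssM
      have hzA : z ∉ A := fun hz => hzB (h hz)
      intro heq
      have : z ∈ M' := by rw [hM']; exact Finset.mem_insert_of_mem (Finset.mem_sdiff.mpr ⟨hzM, hzA⟩)
      rw [← heq] at this
      rcases Finset.mem_insert.mp this with h1 | h1
      · exact hzA (h1 ▸ ha)
      · exact hzB (Finset.mem_sdiff.mp h1).1
    · rw [hc]; simp only [if_neg (hdisj_notsub B h)]
      intro heq
      have : a ∈ B := by rw [heq, hM']; exact Finset.mem_insert_self _ _
      have := Finset.mem_inter.mpr ⟨ha, this⟩; rw [h] at this; simp at this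
  have hclam : ∀ B1 ∈ F.erase A, ∀ B2 ∈ F.erase A,
      c B1 ∩ c B2 = ∅ ∨ c B1 ⊆ c B2 ∨ c B2 ⊆ c B1 := by
    have main : ∀ B1 ∈ F.erase A, ∀ B2 ∈ F.erase A, (A ⊆ B1) → (A ∩ B2 = ∅) →
        c B1 ∩ c B2 = ∅ ∨ c B1 ⊆ c B2 ∨ c B2 ⊆ c B1 := by
      intro B1 hB1 B2 hB2 h1 h2
      have hB1F := Finset.mem_of_mem_erase hB1
      have hB2F := Finset.mem_of_mem_erase hB2
      rw [hc]; simp only [if_pos h1, if_neg (hdisj_notsub B2 h2)]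
      rcases hlam B1 hB1F B2 hB2F with h | h | h
      · left
        ext z; simp only [Finset.mem_inter, Finset.mem_insert, Finset.mem_sdiff,
          Finset.notMem_empty, iff_false, not_and]
        rintro (rfl | ⟨hz1, _⟩) hz2
        · have := Finset.mem_inter.mpr ⟨ha, hz2⟩; rw [h2] at this; simp at this
        · have := Finset.mem_inter.mpr ⟨hz1, hz2⟩; rw [h] at this; simp at this
      · exfalso; exact hdisj_notsub B2 h2 (h1.trans h)
      · right; right
        intro z hz
        exact Finset.mem_insert_of_mem (Finset.mem_sdiff.mpr ⟨h hz,
          fun hzA => by have := Finset.mem_inter.mpr ⟨hzA, hz⟩; rw [h2] at this; simp at this⟩)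
    intro B1 hB1 B2 hB2
    rcases hmem B1 hB1 with ⟨h1, hne1⟩ | h1 <;> rcases hmem B2 hB2 with ⟨h2, hne2⟩ | h2
    · have hB1F := Finset.mem_of_mem_erase hB1
      have hB2F := Finset.mem_of_mem_erase hB2
      rcases hlam B1 hB1F B2 hB2F with h | h | h
      · exfalso; have := Finset.mem_inter.mpr ⟨h1 ha, h2 ha⟩; rw [h] at this; simp at this
      · right; left; rw [hc]; simp only [if_pos h1, if_pos h2]
        exact Finset.insert_subset_insert a (Finset.sdiff_subset_sdiff h le_rfl)
      · right; right; rw [hc]; simp only [if_pos h1, if_pos h2]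
        exact Finset.insert_subset_insert a (Finset.sdiff_subset_sdiff h le_rfl)
    · exact main B1 hB1 B2 hB2 h1 h2
    · rcases main B2 hB2 B1 hB1 h2 h1 with h | h | h
      · left; rw [Finset.inter_comm]; exact h
      · right; right; exact h
      · right; left; exact h
    · rw [hc]; simp only [if_neg (hdisj_notsub B1 h1), if_neg (hdisj_notsub B2 h2)]
      exact hlam B1 (Finset.mem_of_mem_erase hB1) B2 (Finset.mem_of_mem_erase hB2)
  have hacB : ∀ B ∈ F.erase A, (a ∈ c B ↔ A ⊆ B) := by
    intro B hB
    rcases hmem B hB with ⟨h, _⟩ | h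
    · rw [hc]; simp only [if_pos h]; simp [h]
    · rw [hc]; simp only [if_neg (hdisj_notsub B h)]
      constructor
      · intro hh; exfalso
        have := Finset.mem_inter.mpr ⟨ha, hh⟩; rw [h] at this; simp at this
      · intro hh; exact absurd hh (hdisj_notsub B h)
  have hinj : Set.InjOn c (F.erase A) := by
    intro B1 hB1 B2 hB2 heq
    rw [Finset.mem_coe] at hB1 hB2
    by_cases h1 : A ⊆ B1 <;> by_cases h2 : A ⊆ B2
    · have e1 : c B1 = insert a (B1 \ A) := by rw [hc]; simp only [if_pos h1]
      have e2 : c B2 = insert a (B2 \ A) := by rw [hc]; simp only [if_pos h2]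
      rw [e1, e2] at heq
      have ha1 : a ∉ B1 \ A := fun h => (Finset.mem_sdiff.mp h).2 ha
      have ha2 : a ∉ B2 \ A := fun h => (Finset.mem_sdiff.mp h).2 ha
      have hd : B1 \ A = B2 \ A := by
        rw [← Finset.erase_insert ha1, ← Finset.erase_insert ha2, heq]
      calc B1 = B1 \ A ∪ A := (Finset.sdiff_union_of_subset h1).symm
      _ = B2 \ A ∪ A := by rw [hd]
      _ = B2 := Finset.sdiff_union_of_subset h2
    · exact absurd ((hacB B2 hB2).mp (heq ▸ (hacB B1 hB1).mpr h1)) h2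
    · exact absurd ((hacB B1 hB1).mp (heq.symm ▸ (hacB B2 hB2).mpr h2)) h1
    · have e1 : c B1 = B1 := by rw [hc]; simp only [if_neg h1]
      have e2 : c B2 = B2 := by rw [hc]; simp only [if_neg h2]
      rw [e1, e2] at heq; exact heq
  have hGcard : G.card + 1 = F.card := by
    rw [hG, Finset.card_image_of_injOn hinj, Finset.card_erase_add_one hAF]
  refine ⟨M', G, hM'card, hGcard, ?_, ?_, ?_, ?_⟩
  · intro X hX; obtain ⟨B, hB, rfl⟩ := Finset.mem_image.mp hX; exact hcsub B hB
  · intro X hX; obtain ⟨B, hB, rfl⟩ := Finset.mem_image.mp hX; exact hcsz B hB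
  · intro X hX; obtain ⟨B, hB, rfl⟩ := Finset.mem_image.mp hX; exact hcpr B hB
  · intro X hX Y hY
    obtain ⟨B1, hB1, rfl⟩ := Finset.mem_image.mp hX
    obtain ⟨B2, hB2, rfl⟩ := Finset.mem_image.mp hY
    exact hclam B1 hB1 B2 hB2

lemma laminar_bound : ∀ (m : ℕ) (M : Finset α) (F : Finset (Finset α)),
    M.card ≤ m →
    (∀ X ∈ F, X ⊆ M) → (∀ X ∈ F, 2 ≤ X.card) → (∀ X ∈ F, X ≠ M) →
    (∀ X ∈ F, ∀ Y ∈ F, X ∩ Y = ∅ ∨ X ⊆ Y ∨ Y ⊆ X) →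
    F.card + 2 ≤ M.card ∨ F = ∅ := by
  intro m
  induction m with
  | zero =>
    intro M F hm hsub hsz _ _
    right
    rw [Finset.eq_empty_iff_forall_notMem]
    intro A hA
    have h1 := Finset.card_le_card (hsub A hA)
    have h2 := hsz A hA
    omega
  | succ m ih =>
    intro M F hm hsub hsz hpr hlam
    rcases F.eq_empty_or_nonempty with rfl | hne
    · exact Or.inr rfl
    obtain ⟨A, hAF, hmin⟩ := F.exists_min_image Finset.card hne
    have hA2 := hsz A hAF
    obtain ⟨a, ha⟩ := Finset.card_pos.mp (by omega : 0 < A.card)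
    obtain ⟨M', G, hM', hGF, hsub', hsz', hpr', hlam'⟩ :=
      contract_step M F A a hsub hsz hpr hlam hAF hmin ha
    have hM'le : M'.card ≤ m := by omega
    rcases ih M' G hM'le hsub' hsz' hpr' hlam' with h | h
    · left; omega
    · left
      have hF1 : F.card = 1 := by rw [← hGF, h]; simp
      have hAss : A ⊂ M := Finset.ssubset_iff_subset_ne.mpr ⟨hsub A hAF, hpr A hAF⟩
      have := Finset.card_lt_card hAss
      omega

lemma delete_step (M : Finset α) (F : Finset (Finset α)) (Q : Finset α) (A : Finset α) (x : α)
    (hsub : ∀ X ∈ F, X ⊆ M) (hsz : ∀ X ∈ F, 2 ≤ X.card) (hpr : ∀ X ∈ F, X ≠ M)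
    (hlam : ∀ X ∈ F, ∀ Y ∈ F, X ∩ Y = ∅ ∨ X ⊆ Y ∨ Y ⊆ X)
    (hQF : ∀ X ∈ F, (X ∩ Q).card ≠ 2)
    (hAF : A ∈ F) (hmin : ∀ B ∈ F, A.card ≤ B.card) (hA2 : A.card = 2)
    (hx : x ∈ A) (hxQ : x ∉ Q) :
    ∃ (G : Finset (Finset α)),
      G.card + 1 = F.card ∧
      (∀ X ∈ G, X ⊆ M.erase x) ∧ (∀ X ∈ G, 2 ≤ X.card) ∧ (∀ X ∈ G, X ≠ M.erase x) ∧
      (∀ X ∈ G, ∀ Y ∈ G, X ∩ Y = ∅ ∨ X ⊆ Y ∨ Y ⊆ X) ∧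
      (∀ X ∈ G, (X ∩ Q).card ≠ 2) := by
  classical
  have hxM : x ∈ M := hsub A hAF hx
  have key : ∀ B ∈ F, B ≠ A → A ⊆ B ∨ A ∩ B = ∅ := by
    intro B hB hne
    rcases hlam A hAF B hB with h | h | h
    · exact Or.inr h
    · exact Or.inl h
    · exact absurd (Finset.eq_of_subset_of_card_le h (hmin B hB)) hne
  -- the second element of A
  obtain ⟨u, v, huv, hA⟩ := Finset.card_eq_two.mp hA2
  have hy : ∃ y ∈ A, y ≠ x := by
    rcases Finset.mem_insert.mp (hA ▸ hx) with rfl | h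
    · exact ⟨v, by rw [hA]; simp, by rw [hA] at *; exact fun e => huv e.symm⟩
    · simp only [Finset.mem_singleton] at h; subst h
      exact ⟨u, by rw [hA]; simp, huv⟩
  obtain ⟨y, hyA, hyx⟩ := hy
  have hmem : ∀ B ∈ F.erase A, (A ⊆ B ∧ B ≠ A) ∨ A ∩ B = ∅ := by
    intro B hB
    have hBF := Finset.mem_of_mem_erase hB
    have hBne := Finset.ne_of_mem_erase hB
    rcases key B hBF hBne with h | h
    · exact Or.inl ⟨h, hBne⟩
    · exact Or.inr h
  have hsubA_of_mem : ∀ B ∈ F.erase A, ∀ z, z ∈ A → z ∈ B → A ⊆ B := by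
    intro B hB z hzA hzB
    rcases hmem B hB with ⟨h, _⟩ | h
    · exact h
    · exfalso; have := Finset.mem_inter.mpr ⟨hzA, hzB⟩; rw [h] at this; simp at this
  set G : Finset (Finset α) := (F.erase A).image (fun B => B.erase x) with hG
  have hinj : Set.InjOn (fun B : Finset α => B.erase x) (F.erase A) := by
    intro B1 hB1 B2 hB2 heq
    rw [Finset.mem_coe] at hB1 hB2
    simp only at heq
    by_cases h1 : x ∈ B1 <;> by_cases h2 : x ∈ B2
    · rw [← Finset.insert_erase h1, ← Finset.insert_erase h2, heq]
    · exfalso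
      have hAB1 : A ⊆ B1 := hsubA_of_mem B1 hB1 x hx h1
      have hyB2 : y ∈ B2 := by
        have : y ∈ B1.erase x := Finset.mem_erase.mpr ⟨hyx, hAB1 hyA⟩
        rw [heq] at this; exact Finset.mem_of_mem_erase this
      exact h2 (hsubA_of_mem B2 hB2 y hyA hyB2 hx)
    · exfalso
      have hAB2 : A ⊆ B2 := hsubA_of_mem B2 hB2 x hx h2
      have hyB1 : y ∈ B1 := by
        have : y ∈ B2.erase x := Finset.mem_erase.mpr ⟨hyx, hAB2 hyA⟩
        rw [← heq] at this; exact Finset.mem_of_mem_erase this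
      exact h1 (hsubA_of_mem B1 hB1 y hyA hyB1 hx)
    · rw [← Finset.erase_eq_of_notMem h1, ← Finset.erase_eq_of_notMem h2, heq]
  refine ⟨G, ?_, ?_, ?_, ?_, ?_, ?_⟩
  · rw [hG, Finset.card_image_of_injOn hinj, Finset.card_erase_add_one hAF]
  · intro X hX; obtain ⟨B, hB, rfl⟩ := Finset.mem_image.mp hX
    exact Finset.erase_subset_erase x (hsub B (Finset.mem_of_mem_erase hB))
  · intro X hX; obtain ⟨B, hB, rfl⟩ := Finset.mem_image.mp hX
    by_cases h : x ∈ B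
    · have hAB : A ⊆ B := hsubA_of_mem B hB x hx h
      have : A ⊂ B := Finset.ssubset_iff_subset_ne.mpr ⟨hAB, fun e => (Finset.ne_of_mem_erase hB) e.symm⟩
      have h3 := Finset.card_lt_card this
      rw [Finset.card_erase_of_mem h]
      omega
    · rw [Finset.erase_eq_of_notMem h]; exact hsz B (Finset.mem_of_mem_erase hB)
  · intro X hX; obtain ⟨B, hB, rfl⟩ := Finset.mem_image.mp hX
    intro heq
    by_cases h : x ∈ B
    · have : B = M := by rw [← Finset.insert_erase h, heq, Finset.insert_erase hxM]
      exact hpr B (Finset.mem_of_mem_erase hB) this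
    · rw [Finset.erase_eq_of_notMem h] at heq
      have hyB : y ∈ B := by
        rw [heq]; exact Finset.mem_erase.mpr ⟨hyx, hsub A hAF hyA⟩
      exact h (hsubA_of_mem B hB y hyA hyB hx)
  · intro X hX Y hY
    obtain ⟨B1, hB1, rfl⟩ := Finset.mem_image.mp hX
    obtain ⟨B2, hB2, rfl⟩ := Finset.mem_image.mp hY
    rcases hlam B1 (Finset.mem_of_mem_erase hB1) B2 (Finset.mem_of_mem_erase hB2) with h | h | h
    · left
      rw [Finset.eq_empty_iff_forall_notMem]
      intro z hz
      rw [Finset.mem_inter] at hz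
      have : z ∈ B1 ∩ B2 := Finset.mem_inter.mpr
        ⟨Finset.mem_of_mem_erase hz.1, Finset.mem_of_mem_erase hz.2⟩
      rw [h] at this; simp at this
    · right; left; exact Finset.erase_subset_erase x h
    · right; right; exact Finset.erase_subset_erase x h
  · intro X hX; obtain ⟨B, hB, rfl⟩ := Finset.mem_image.mp hX
    have : B.erase x ∩ Q = B ∩ Q := by
      ext z
      simp only [Finset.mem_inter, Finset.mem_erase]
      constructor
      · rintro ⟨⟨_, h1⟩, h2⟩; exact ⟨h1, h2⟩
      · rintro ⟨h1, h2⟩; exact ⟨⟨fun e => hxQ (e ▸ h2), h1⟩, h2⟩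
    rw [this]
    exact hQF B (Finset.mem_of_mem_erase hB)

lemma laminar_bound_q : ∀ (m : ℕ) (M : Finset α) (F : Finset (Finset α)) (Q : Finset α),
    M.card ≤ m → Q ⊆ M → Q.card = 4 →
    (∀ X ∈ F, X ⊆ M) → (∀ X ∈ F, 2 ≤ X.card) → (∀ X ∈ F, X ≠ M) →
    (∀ X ∈ F, ∀ Y ∈ F, X ∩ Y = ∅ ∨ X ⊆ Y ∨ Y ⊆ X) →
    (∀ X ∈ F, (X ∩ Q).card ≠ 2) →
    F.card + 3 ≤ M.card ∨ F = ∅ := by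
  intro m
  induction m with
  | zero =>
    intro M F Q hm hQM hQ4 _ _ _ _ _
    have := Finset.card_le_card hQM
    omega
  | succ m ih =>
    intro M F Q hm hQM hQ4 hsub hsz hpr hlam hQF
    rcases F.eq_empty_or_nonempty with rfl | hne
    · exact Or.inr rfl
    obtain ⟨A, hAF, hmin⟩ := F.exists_min_image Finset.card hne
    have hA2 := hsz A hAF
    have hM4 : 4 ≤ M.card := hQ4 ▸ Finset.card_le_card hQM
    by_cases hA3 : 3 ≤ A.card
    · obtain ⟨a, ha⟩ := Finset.card_pos.mp (by omega : 0 < A.card)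
      obtain ⟨M', G, hM', hGF, hsub', hsz', hpr', hlam'⟩ :=
        contract_step M F A a hsub hsz hpr hlam hAF hmin ha
      rcases laminar_bound M'.card M' G le_rfl hsub' hsz' hpr' hlam' with h | h
      · left; omega
      · left
        have : F.card = 1 := by rw [← hGF, h]; simp
        omega
    · have hAc2 : A.card = 2 := by omega
      have hxex : ∃ x ∈ A, x ∉ Q := by
        by_contra hcon
        push_neg at hcon
        have hsubQ : A ⊆ Q := hcon
        have : A ∩ Q = A := Finset.inter_eq_left.mpr hsubQ
        exact hQF A hAF (by rw [this, hAc2])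
      obtain ⟨x, hxA, hxQ⟩ := hxex
      obtain ⟨G, hGF, hsub', hsz', hpr', hlam', hQF'⟩ :=
        delete_step M F Q A x hsub hsz hpr hlam hQF hAF hmin hAc2 hxA hxQ
      have hxM : x ∈ M := hsub A hAF hxA
      have hcard : (M.erase x).card + 1 = M.card := Finset.card_erase_add_one hxM
      have hQ' : Q ⊆ M.erase x := fun z hz => Finset.mem_erase.mpr ⟨fun e => hxQ (e ▸ hz), hQM hz⟩
      rcases ih (M.erase x) G Q (by omega) hQ' hQ4 hsub' hsz' hpr' hlam' hQF' with h | h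
      · left; omega
      · left
        have : F.card = 1 := by rw [← hGF, h]; simp
        omega

end Laminar

lemma resolve {n : ℕ} (hn : 4 ≤ n) (T : PhyloBinaryTree n) (Q : Finset (Fin n)) (hQ : Q.card = 4) :
    ∃ A ∈ T.splits, (A ∩ Q).card = 2 := by
  classical
  by_contra hcon
  push_neg at hcon
  rcases Nat.lt_or_ge n 5 with h5 | h5
  · -- n = 4
    have hn4 : n = 4 := by omega
    have hc1 : T.splits.card = 1 := by rw [T.card_splits, hn4]
    obtain ⟨A, hA⟩ := Finset.card_eq_one.mp hc1
    have hAmem : A ∈ T.splits := by rw [hA]; simp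
    have hnt := T.nontriv A hAmem
    have hQu : Q = Finset.univ := by
      apply Finset.eq_univ_of_card
      rw [hQ]; simp [hn4]
    have : (A ∩ Q).card = 2 := by
      rw [hQu, Finset.inter_univ]
      rcases hnt with ⟨h1, h2⟩
      omega
    exact hcon A hAmem this
  · -- n ≥ 5 : reduce to laminar bound
    have hx0 : (Qᶜ : Finset (Fin n)).Nonempty := by
      rw [← Finset.card_pos, Finset.card_compl, hQ]
      simp; omega
    obtain ⟨x0, hx0Q⟩ := hx0
    rw [Finset.mem_compl] at hx0Q
    set norm : Finset (Fin n) → Finset (Fin n) := fun A => if x0 ∈ A then Aᶜ else A with hnorm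
    set M : Finset (Fin n) := ({x0} : Finset (Fin n))ᶜ with hM
    set F : Finset (Finset (Fin n)) := T.splits.image norm with hF
    have hMcard : M.card = n - 1 := by
      rw [hM, Finset.card_compl]; simp
    have hnormcard : ∀ A ∈ T.splits, 2 ≤ (norm A).card ∧ (norm A).card ≤ n - 2 := by
      intro A hA
      obtain ⟨h1, h2⟩ := T.nontriv A hA
      have hcc : (Aᶜ : Finset (Fin n)).card = n - A.card := by
        rw [Finset.card_compl]; simp
      have hAle : A.card ≤ n := le_trans h2 (by omega)
      rw [hnorm]
      by_cases h : x0 ∈ A <;> simp only [if_pos, if_neg, h, ite_true, ite_false] <;>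
        constructor <;> omega
    have hx0norm : ∀ A ∈ T.splits, x0 ∉ norm A := by
      intro A hA
      rw [hnorm]
      by_cases h : x0 ∈ A <;> simp [h]
    have hsub : ∀ X ∈ F, X ⊆ M := by
      intro X hX
      obtain ⟨A, hA, rfl⟩ := Finset.mem_image.mp hX
      intro z hz
      rw [hM, Finset.mem_compl, Finset.mem_singleton]
      intro e
      exact hx0norm A hA (e ▸ hz)
    have hsz : ∀ X ∈ F, 2 ≤ X.card := by
      intro X hX
      obtain ⟨A, hA, rfl⟩ := Finset.mem_image.mp hX
      exact (hnormcard A hA).1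
    have hpr : ∀ X ∈ F, X ≠ M := by
      intro X hX
      obtain ⟨A, hA, rfl⟩ := Finset.mem_image.mp hX
      intro e
      have h1 := (hnormcard A hA).2
      rw [e, hMcard] at h1
      omega
    have hlam : ∀ X ∈ F, ∀ Y ∈ F, X ∩ Y = ∅ ∨ X ⊆ Y ∨ Y ⊆ X := by
      intro X hX Y hY
      obtain ⟨A, hA, rfl⟩ := Finset.mem_image.mp hX
      obtain ⟨B, hB, rfl⟩ := Finset.mem_image.mp hY
      have hC : Split.Compat (norm A) (norm B) := by
        have h0 := T.compat A hA B hB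
        unfold Split.Compat at h0 ⊢
        rw [hnorm]
        by_cases h1 : x0 ∈ A <;> by_cases h2 : x0 ∈ B <;>
          simp only [h1, h2, ite_true, ite_false, compl_compl] <;> tauto
      rcases hC with h | h | h | h
      · exact Or.inl h
      · refine Or.inr (Or.inl ?_)
        intro z hz
        by_contra hzB
        have : z ∈ norm A ∩ (norm B)ᶜ := Finset.mem_inter.mpr ⟨hz, Finset.mem_compl.mpr hzB⟩
        rw [h] at this; simp at this
      · refine Or.inr (Or.inr ?_)
        intro z hz
        by_contra hzA
        have : z ∈ (norm A)ᶜ ∩ norm B := Finset.mem_inter.mpr ⟨Finset.mem_compl.mpr hzA, hz⟩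
        rw [h] at this; simp at this
      · exfalso
        have : x0 ∈ (norm A)ᶜ ∩ (norm B)ᶜ := Finset.mem_inter.mpr
          ⟨Finset.mem_compl.mpr (hx0norm A hA), Finset.mem_compl.mpr (hx0norm B hB)⟩
        rw [h] at this; simp at this
    have hQF : ∀ X ∈ F, (X ∩ Q).card ≠ 2 := by
      intro X hX
      obtain ⟨A, hA, rfl⟩ := Finset.mem_image.mp hX
      have hk := hcon A hA
      have hkle : (A ∩ Q).card ≤ 4 := by
        calc (A ∩ Q).card ≤ Q.card := Finset.card_le_card (Finset.inter_subset_right)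
        _ = 4 := hQ
      rw [hnorm]
      by_cases h : x0 ∈ A <;> simp only [h, ite_true, ite_false]
      · have he : Aᶜ ∩ Q = Q \ (A ∩ Q) := by
          ext z
          simp only [Finset.mem_inter, Finset.mem_compl, Finset.mem_sdiff]
          tauto
        rw [he, Finset.card_sdiff_of_subset Finset.inter_subset_right, hQ]
        omega
      · exact hk
    have hinj : Set.InjOn norm T.splits := by
      intro A hA B hB heq
      rw [Finset.mem_coe] at hA hB
      by_contra hne
      have hnc := T.not_compl A hA B hB hne
      rw [hnorm] at heq
      by_cases h1 : x0 ∈ A <;> by_cases h2 : x0 ∈ B <;>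
        simp only [h1, h2, ite_true, ite_false] at heq
      · exact hne (by rw [← compl_compl A, heq, compl_compl])
      · exact hnc (by rw [← heq, compl_compl])
      · exact hnc (by rw [heq])
      · exact hne heq
    have hFcard : F.card = n - 3 := by
      rw [hF, Finset.card_image_of_injOn hinj, T.card_splits]
    have hQM : Q ⊆ M := by
      intro z hz
      rw [hM, Finset.mem_compl, Finset.mem_singleton]
      intro e; exact hx0Q (e ▸ hz)
    rcases laminar_bound_q M.card M F Q le_rfl hQM hQ hsub hsz hpr hlam hQF with h | h
    · rw [hFcard, hMcard] at h; omega
    · rw [h] at hFcard; simp at hFcard; omega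

lemma compl_inter_q {n : ℕ} (A Q : Finset (Fin n)) : Aᶜ ∩ Q = Q \ (A ∩ Q) := by
  ext z
  simp only [Finset.mem_inter, Finset.mem_compl, Finset.mem_sdiff]
  tauto

lemma samepair {n : ℕ} (Q A B : Finset (Fin n)) (hQ : Q.card = 4) (hc : Split.Compat A B)
    (hA : (A ∩ Q).card = 2) (hB : (B ∩ Q).card = 2) :
    B ∩ Q = A ∩ Q ∨ B ∩ Q = Q \ (A ∩ Q) := by
  have hsd : (Q \ (A ∩ Q)).card = 2 := by
    rw [Finset.card_sdiff_of_subset Finset.inter_subset_right, hQ, hA]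
  rcases hc with h | h | h | h
  · right
    apply Finset.eq_of_subset_of_card_le _ (by omega)
    intro z hz
    rw [Finset.mem_inter] at hz
    rw [Finset.mem_sdiff]
    refine ⟨hz.2, fun hzA => ?_⟩
    have : z ∈ A ∩ B := Finset.mem_inter.mpr ⟨(Finset.mem_inter.mp hzA).1, hz.1⟩
    rw [h] at this; simp at this
  · left
    symm
    apply Finset.eq_of_subset_of_card_le _ (by omega)
    intro z hz
    rw [Finset.mem_inter] at hz ⊢
    refine ⟨?_, hz.2⟩
    by_contra hzB
    have : z ∈ A ∩ Bᶜ := Finset.mem_inter.mpr ⟨hz.1, Finset.mem_compl.mpr hzB⟩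
    rw [h] at this; simp at this
  · left
    apply Finset.eq_of_subset_of_card_le _ (by omega)
    intro z hz
    rw [Finset.mem_inter] at hz ⊢
    refine ⟨?_, hz.2⟩
    by_contra hzA
    have : z ∈ Aᶜ ∩ B := Finset.mem_inter.mpr ⟨Finset.mem_compl.mpr hzA, hz.1⟩
    rw [h] at this; simp at this
  · right
    symm
    apply Finset.eq_of_subset_of_card_le _ (by omega)
    intro z hz
    rw [Finset.mem_sdiff] at hz
    rw [Finset.mem_inter]
    refine ⟨?_, hz.1⟩
    by_contra hzB
    have hzA : z ∉ A := fun hh => hz.2 (Finset.mem_inter.mpr ⟨hh, hz.1⟩)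
    have : z ∈ Aᶜ ∩ Bᶜ := Finset.mem_inter.mpr ⟨Finset.mem_compl.mpr hzA, Finset.mem_compl.mpr hzB⟩
    rw [h] at this; simp at this

lemma quartet_eq {n : ℕ} (T : PhyloBinaryTree n) (Q : Finset (Fin n)) (hQ : Q.card = 4)
    (A : Finset (Fin n)) (hA : A ∈ T.splits) (h2 : (A ∩ Q).card = 2) :
    quartet T Q = {A ∩ Q, Q \ (A ∩ Q)} := by
  have hsd : (Q \ (A ∩ Q)).card = 2 := by
    rw [Finset.card_sdiff_of_subset Finset.inter_subset_right, hQ, h2]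
  apply Set.eq_of_subset_of_subset
  · rintro P ⟨B, hBfull, hor, hc1, hc2⟩
    have hBsp : B ∈ T.splits := by
      rcases Finset.mem_union.mp hBfull with h | h
      · exact h
      · exfalso
        obtain ⟨i, _, rfl⟩ := Finset.mem_image.mp h
        have : ({i} : Finset (Fin n)) ∩ Q ⊆ {i} := Finset.inter_subset_left
        have := Finset.card_le_card this
        simp at this
        omega
    have hsp := samepair Q A B hQ (T.compat A hA B hBsp) h2 hc1
    have hBc : Bᶜ ∩ Q = Q \ (B ∩ Q) := compl_inter_q B Q
    simp only [Set.mem_insert_iff, Set.mem_singleton_iff]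
    rcases hor with rfl | rfl
    · rcases hsp with h | h
      · exact Or.inl h
      · exact Or.inr h
    · rcases hsp with h | h
      · rw [hBc, h]; exact Or.inr rfl
      · rw [hBc, h]
        left
        exact Finset.sdiff_sdiff_eq_self Finset.inter_subset_right
  · intro P hP
    simp only [Set.mem_insert_iff, Set.mem_singleton_iff] at hP
    have hc2' : (Aᶜ ∩ Q).card = 2 := by rw [compl_inter_q]; exact hsd
    rcases hP with rfl | rfl
    · exact ⟨A, Finset.mem_union_left _ hA, Or.inl rfl, h2, hc2'⟩
    · exact ⟨A, Finset.mem_union_left _ hA, Or.inr (compl_inter_q A Q), h2, hc2'⟩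

lemma trace_iff {n : ℕ} (Q e : Finset (Fin n)) (a b c d : Fin n)
    (hQ : Q = {a, b, c, d}) (hca : c ≠ a) (hcb : c ≠ b) (hda : d ≠ a) (hdb : d ≠ b) :
    e ∩ Q = {a, b} ↔ (a ∈ e ∧ b ∈ e ∧ c ∉ e ∧ d ∉ e) := by
  subst hQ
  constructor
  · intro h
    have hae : a ∈ e := by
      have : a ∈ e ∩ ({a,b,c,d} : Finset (Fin n)) := by rw [h]; simp
      exact (Finset.mem_inter.mp this).1
    have hbe : b ∈ e := by
      have : b ∈ e ∩ ({a,b,c,d} : Finset (Fin n)) := by rw [h]; simp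
      exact (Finset.mem_inter.mp this).1
    have hce : c ∉ e := by
      intro hce
      have : c ∈ e ∩ ({a,b,c,d} : Finset (Fin n)) := Finset.mem_inter.mpr ⟨hce, by simp⟩
      rw [h] at this
      rcases Finset.mem_insert.mp this with h' | h'
      · exact hca h'
      · exact hcb (Finset.mem_singleton.mp h')
    have hde : d ∉ e := by
      intro hde
      have : d ∈ e ∩ ({a,b,c,d} : Finset (Fin n)) := Finset.mem_inter.mpr ⟨hde, by simp⟩
      rw [h] at this
      rcases Finset.mem_insert.mp this with h' | h'
      · exact hda h'
      · exact hdb (Finset.mem_singleton.mp h')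
    exact ⟨hae, hbe, hce, hde⟩
  · rintro ⟨h1, h2, h3, h4⟩
    ext z
    simp only [Finset.mem_inter, Finset.mem_insert, Finset.mem_singleton]
    constructor
    · rintro ⟨hz, (rfl | rfl | rfl | rfl)⟩ <;> tauto
    · rintro (rfl | rfl) <;> tauto

/-- The vector assigning values `v0,v1,v2,v3` to `q0,q1,q2,q3` and `0` elsewhere. -/
def gvec {n : ℕ} (q0 q1 q2 q3 : Fin n) (v0 v1 v2 v3 : Gp) : Fin n → Gp :=
  fun i => (if i = q0 then v0 else 0) + (if i = q1 then v1 else 0) +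
    (if i = q2 then v2 else 0) + (if i = q3 then v3 else 0)

lemma sum_gvec {n : ℕ} (q0 q1 q2 q3 : Fin n) (v0 v1 v2 v3 : Gp) (e : Finset (Fin n)) :
    ∑ i ∈ e, gvec q0 q1 q2 q3 v0 v1 v2 v3 i =
      (if q0 ∈ e then v0 else 0) + (if q1 ∈ e then v1 else 0) +
      (if q2 ∈ e then v2 else 0) + (if q3 ∈ e then v3 else 0) := by
  unfold gvec
  rw [Finset.sum_add_distrib, Finset.sum_add_distrib, Finset.sum_add_distrib,
    Finset.sum_ite_eq' e q0 (fun _ => v0), Finset.sum_ite_eq' e q1 (fun _ => v1),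
    Finset.sum_ite_eq' e q2 (fun _ => v2), Finset.sum_ite_eq' e q3 (fun _ => v3)]

lemma sum_gvec_univ {n : ℕ} (q0 q1 q2 q3 : Fin n) (v0 v1 v2 v3 : Gp) :
    ∑ i, gvec q0 q1 q2 q3 v0 v1 v2 v3 i = v0 + v1 + v2 + v3 := by
  rw [sum_gvec]
  simp

lemma bash_b (p0 p1 p2 p3 : Prop) [Decidable p0] [Decidable p1] [Decidable p2] [Decidable p3]
    (h12 : ¬(p0 ∧ p1 ∧ ¬p2 ∧ ¬p3)) (h34 : ¬(¬p0 ∧ ¬p1 ∧ p2 ∧ p3))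
    (h14 : ¬(p0 ∧ ¬p1 ∧ ¬p2 ∧ p3)) (h23 : ¬(¬p0 ∧ p1 ∧ p2 ∧ ¬p3)) :
    (((if p0 then (((1:ZMod 2),(1:ZMod 2)) : Gp) else 0) + (if p1 then (((1:ZMod 2),(1:ZMod 2)) : Gp) else 0) +
      (if p2 then (((1:ZMod 2),(1:ZMod 2)) : Gp) else 0) + (if p3 then (((1:ZMod 2),(1:ZMod 2)) : Gp) else 0) = 0) ↔
     ((if p0 then (((1:ZMod 2),(0:ZMod 2)) : Gp) else 0) + (if p1 then (((0:ZMod 2),(1:ZMod 2)) : Gp) else 0) +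
      (if p2 then (((1:ZMod 2),(0:ZMod 2)) : Gp) else 0) + (if p3 then (((0:ZMod 2),(1:ZMod 2)) : Gp) else 0) = 0))
    ∧
    (((if p0 then (((1:ZMod 2),(0:ZMod 2)) : Gp) else 0) + (if p1 then (((1:ZMod 2),(0:ZMod 2)) : Gp) else 0) +
      (if p2 then (((0:ZMod 2),(1:ZMod 2)) : Gp) else 0) + (if p3 then (((0:ZMod 2),(1:ZMod 2)) : Gp) else 0) = 0) ↔
     ((if p0 then (((1:ZMod 2),(0:ZMod 2)) : Gp) else 0) + (if p1 then (((0:ZMod 2),(1:ZMod 2)) : Gp) else 0) +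
      (if p2 then (((0:ZMod 2),(1:ZMod 2)) : Gp) else 0) + (if p3 then (((1:ZMod 2),(0:ZMod 2)) : Gp) else 0) = 0)) := by
  by_cases p0 <;> by_cases p1 <;> by_cases p2 <;> by_cases p3 <;> simp_all <;> decide

lemma bash_c (p0 p1 p2 p3 : Prop) [Decidable p0] [Decidable p1] [Decidable p2] [Decidable p3]
    (h12 : ¬(p0 ∧ p1 ∧ ¬p2 ∧ ¬p3)) (h34 : ¬(¬p0 ∧ ¬p1 ∧ p2 ∧ p3))
    (h13 : ¬(p0 ∧ ¬p1 ∧ p2 ∧ ¬p3)) (h24 : ¬(¬p0 ∧ p1 ∧ ¬p2 ∧ p3)) :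
    (((if p0 then (((1:ZMod 2),(1:ZMod 2)) : Gp) else 0) + (if p1 then (((1:ZMod 2),(1:ZMod 2)) : Gp) else 0) +
      (if p2 then (((1:ZMod 2),(1:ZMod 2)) : Gp) else 0) + (if p3 then (((1:ZMod 2),(1:ZMod 2)) : Gp) else 0) = 0) ↔
     ((if p0 then (((1:ZMod 2),(0:ZMod 2)) : Gp) else 0) + (if p1 then (((0:ZMod 2),(1:ZMod 2)) : Gp) else 0) +
      (if p2 then (((0:ZMod 2),(1:ZMod 2)) : Gp) else 0) + (if p3 then (((1:ZMod 2),(0:ZMod 2)) : Gp) else 0) = 0))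
    ∧
    (((if p0 then (((1:ZMod 2),(0:ZMod 2)) : Gp) else 0) + (if p1 then (((1:ZMod 2),(0:ZMod 2)) : Gp) else 0) +
      (if p2 then (((0:ZMod 2),(1:ZMod 2)) : Gp) else 0) + (if p3 then (((0:ZMod 2),(1:ZMod 2)) : Gp) else 0) = 0) ↔
     ((if p0 then (((1:ZMod 2),(0:ZMod 2)) : Gp) else 0) + (if p1 then (((0:ZMod 2),(1:ZMod 2)) : Gp) else 0) +
      (if p2 then (((1:ZMod 2),(0:ZMod 2)) : Gp) else 0) + (if p3 then (((0:ZMod 2),(1:ZMod 2)) : Gp) else 0) = 0)) := by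
  by_cases p0 <;> by_cases p1 <;> by_cases p2 <;> by_cases p3 <;> simp_all <;> decide

lemma card_pair_f {n : ℕ} (x y : Fin n) (h : x ≠ y) : ({x, y} : Finset (Fin n)).card = 2 := by
  rw [Finset.card_insert_of_notMem (by simp [h]), Finset.card_singleton]

lemma sdiff_pair {n : ℕ} (Q : Finset (Fin n)) (a b c d : Fin n) (hQ : Q = {a, b, c, d})
    (hca : c ≠ a) (hcb : c ≠ b) (hda : d ≠ a) (hdb : d ≠ b) :
    Q \ {a, b} = {c, d} := by
  subst hQ
  ext z
  simp only [Finset.mem_sdiff, Finset.mem_insert, Finset.mem_singleton]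
  constructor
  · rintro ⟨(rfl | rfl | rfl | rfl), h⟩ <;> tauto
  · rintro (rfl | rfl) <;> refine ⟨by tauto, ?_⟩ <;> rintro (h | h) <;> tauto

lemma vanish {n : ℕ} (T : PhyloBinaryTree n) (Q : Finset (Fin n)) (hQ4 : Q.card = 4)
    (q0 q1 q2 q3 : Fin n) (hQeq : Q = {q0, q1, q2, q3})
    (ne01 : q0 ≠ q1) (ne02 : q0 ≠ q2) (ne03 : q0 ≠ q3)
    (ne12 : q1 ≠ q2) (ne13 : q1 ≠ q3) (ne23 : q2 ≠ q3)
    (hyp1 : ∀ e ∈ T.splits, e ∩ Q ≠ {q0, q1} ∧ e ∩ Q ≠ {q2, q3})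
    (a : ↥(fullSplits T) → ℂ) :
    psiJC T a (gvec q0 q1 q2 q3 (1,1) (1,1) (1,1) (1,1)) +
    psiJC T a (gvec q0 q1 q2 q3 (1,0) (1,0) (0,1) (0,1)) -
    psiJC T a (gvec q0 q1 q2 q3 (1,0) (0,1) (1,0) (0,1)) -
    psiJC T a (gvec q0 q1 q2 q3 (1,0) (0,1) (0,1) (1,0)) = 0 := by
  classical
  have hpsi : ∀ (v0 v1 v2 v3 : Gp), v0 + v1 + v2 + v3 = 0 →
      psiJC T a (gvec q0 q1 q2 q3 v0 v1 v2 v3) =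
      ∏ e : ↥(fullSplits T),
        (if (∑ i ∈ (e : Finset (Fin n)), gvec q0 q1 q2 q3 v0 v1 v2 v3 i) = 0 then 1 else a e) := by
    intro v0 v1 v2 v3 hv
    simp only [psiJC]
    rw [if_pos (by rw [sum_gvec_univ]; exact hv)]
  rw [hpsi (1,1) (1,1) (1,1) (1,1) (by decide), hpsi (1,0) (1,0) (0,1) (0,1) (by decide),
    hpsi (1,0) (0,1) (1,0) (0,1) (by decide), hpsi (1,0) (0,1) (0,1) (1,0) (by decide)]
  have exclude : ∀ (aa bb cc dd : Fin n), Q = {aa, bb, cc, dd} → cc ≠ aa → cc ≠ bb →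
      dd ≠ aa → dd ≠ bb → aa ≠ bb → (∀ e ∈ T.splits, e ∩ Q ≠ {aa, bb}) →
      ∀ e ∈ fullSplits T, ¬(aa ∈ e ∧ bb ∈ e ∧ cc ∉ e ∧ dd ∉ e) := by
    intro aa bb cc dd hQe hca hcb hda hdb hab hsplit e he hpat
    rcases Finset.mem_union.mp he with hs | hs
    · exact hsplit e hs ((trace_iff Q e aa bb cc dd hQe hca hcb hda hdb).mpr hpat)
    · obtain ⟨i, _, rfl⟩ := Finset.mem_image.mp hs
      exact hab ((Finset.mem_singleton.mp hpat.1).trans (Finset.mem_singleton.mp hpat.2.1).symm)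
  have hQ0213 : Q = {q0, q2, q1, q3} := by rw [hQeq]; ext z; simp; tauto
  have hQ0312 : Q = {q0, q3, q1, q2} := by rw [hQeq]; ext z; simp; tauto
  have hQ2301 : Q = {q2, q3, q0, q1} := by rw [hQeq]; ext z; simp; tauto
  have hQ1302 : Q = {q1, q3, q0, q2} := by rw [hQeq]; ext z; simp; tauto
  have hQ1203 : Q = {q1, q2, q0, q3} := by rw [hQeq]; ext z; simp; tauto
  have E12 := exclude q0 q1 q2 q3 hQeq ne02.symm ne12.symm ne03.symm ne13.symm ne01
    (fun e he => (hyp1 e he).1)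
  have E34 := exclude q2 q3 q0 q1 hQ2301 ne02 ne03 ne12 ne13 ne23
    (fun e he => (hyp1 e he).2)
  by_cases hpi3 : ∃ e ∈ T.splits, e ∩ Q = {q0, q3} ∨ e ∩ Q = {q1, q2}
  · -- all 2-2 traces of T lie in the pairing {q0,q3}|{q1,q2}
    obtain ⟨B, hB, hBtr⟩ := hpi3
    have hBcard : (B ∩ Q).card = 2 := by
      rcases hBtr with h | h <;> rw [h]
      · exact card_pair_f q0 q3 ne03
      · exact card_pair_f q1 q2 ne12
    have hsd1 : Q \ {q0, q3} = {q1, q2} := sdiff_pair Q q0 q3 q1 q2 hQ0312 ne01.symm ne13 ne02.symm ne23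
    have hsd2 : Q \ {q1, q2} = {q0, q3} := sdiff_pair Q q1 q2 q0 q3 hQ1203 ne01 ne02 ne13.symm ne23.symm
    have htrmem : ∀ e ∈ T.splits, (e ∩ Q).card = 2 → e ∩ Q = {q0, q3} ∨ e ∩ Q = {q1, q2} := by
      intro e he hecard
      have hsp := samepair Q B e hQ4 (T.compat B hB e he) hBcard hecard
      rcases hBtr with h | h <;> rw [h] at hsp
      · rw [hsd1] at hsp; exact hsp
      · rw [hsd2] at hsp; tauto
    have hsplit13 : ∀ e ∈ T.splits, e ∩ Q ≠ {q0, q2} := by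
      intro e he htr
      have hecard : (e ∩ Q).card = 2 := by rw [htr]; exact card_pair_f q0 q2 ne02
      rcases htrmem e he hecard with h | h <;> rw [htr] at h
      · have : q2 ∈ ({q0, q3} : Finset (Fin n)) := h ▸ (by simp)
        simp only [Finset.mem_insert, Finset.mem_singleton] at this
        rcases this with h' | h'
        · exact ne02 h'.symm
        · exact ne23 h'
      · have : q0 ∈ ({q1, q2} : Finset (Fin n)) := h ▸ (by simp)
        simp only [Finset.mem_insert, Finset.mem_singleton] at this
        rcases this with h' | h'
        · exact ne01 h'
        · exact ne02 h'
    have hsplit24 : ∀ e ∈ T.splits, e ∩ Q ≠ {q1, q3} := by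
      intro e he htr
      have hecard : (e ∩ Q).card = 2 := by rw [htr]; exact card_pair_f q1 q3 ne13
      rcases htrmem e he hecard with h | h <;> rw [htr] at h
      · have : q1 ∈ ({q0, q3} : Finset (Fin n)) := h ▸ (by simp)
        simp only [Finset.mem_insert, Finset.mem_singleton] at this
        rcases this with h' | h'
        · exact ne01 h'.symm
        · exact ne13 h'
      · have : q3 ∈ ({q1, q2} : Finset (Fin n)) := h ▸ (by simp)
        simp only [Finset.mem_insert, Finset.mem_singleton] at this
        rcases this with h' | h'
        · exact ne13 h'.symm
        · exact ne23 h'.symm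
    have E13 := exclude q0 q2 q1 q3 hQ0213 ne01.symm ne12 ne03.symm ne23.symm ne02 hsplit13
    have E24 := exclude q1 q3 q0 q2 hQ1302 ne01 ne03 ne12.symm ne23 ne13 hsplit24
    have P1 : (∏ e : ↥(fullSplits T),
        (if (∑ i ∈ (e : Finset (Fin n)), gvec q0 q1 q2 q3 (1,1) (1,1) (1,1) (1,1) i) = 0 then 1 else a e)) =
        ∏ e : ↥(fullSplits T),
        (if (∑ i ∈ (e : Finset (Fin n)), gvec q0 q1 q2 q3 (1,0) (0,1) (0,1) (1,0) i) = 0 then 1 else a e) := by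
      apply Finset.prod_congr rfl
      intro e _
      refine if_congr ?_ rfl rfl
      rw [sum_gvec, sum_gvec]
      exact (bash_c (q0 ∈ (e : Finset (Fin n))) (q1 ∈ (e : Finset (Fin n)))
        (q2 ∈ (e : Finset (Fin n))) (q3 ∈ (e : Finset (Fin n)))
        (E12 e.1 e.2) (fun h => E34 e.1 e.2 ⟨h.2.2.1, h.2.2.2, h.1, h.2.1⟩) (fun h => E13 e.1 e.2 ⟨h.1, h.2.2.1, h.2.1, h.2.2.2⟩) (fun h => E24 e.1 e.2 ⟨h.2.1, h.2.2.2, h.1, h.2.2.1⟩)).1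
    have P2 : (∏ e : ↥(fullSplits T),
        (if (∑ i ∈ (e : Finset (Fin n)), gvec q0 q1 q2 q3 (1,0) (1,0) (0,1) (0,1) i) = 0 then 1 else a e)) =
        ∏ e : ↥(fullSplits T),
        (if (∑ i ∈ (e : Finset (Fin n)), gvec q0 q1 q2 q3 (1,0) (0,1) (1,0) (0,1) i) = 0 then 1 else a e) := by
      apply Finset.prod_congr rfl
      intro e _
      refine if_congr ?_ rfl rfl
      rw [sum_gvec, sum_gvec]
      exact (bash_c (q0 ∈ (e : Finset (Fin n))) (q1 ∈ (e : Finset (Fin n)))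
        (q2 ∈ (e : Finset (Fin n))) (q3 ∈ (e : Finset (Fin n)))
        (E12 e.1 e.2) (fun h => E34 e.1 e.2 ⟨h.2.2.1, h.2.2.2, h.1, h.2.1⟩) (fun h => E13 e.1 e.2 ⟨h.1, h.2.2.1, h.2.1, h.2.2.2⟩) (fun h => E24 e.1 e.2 ⟨h.2.1, h.2.2.2, h.1, h.2.2.1⟩)).2
    rw [P1, P2]
    ring
  · -- no trace in the pairing {q0,q3}|{q1,q2}
    push_neg at hpi3
    have hsplit14 : ∀ e ∈ T.splits, e ∩ Q ≠ {q0, q3} := fun e he => (hpi3 e he).1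
    have hsplit23 : ∀ e ∈ T.splits, e ∩ Q ≠ {q1, q2} := fun e he => (hpi3 e he).2
    have E14 := exclude q0 q3 q1 q2 hQ0312 ne01.symm ne13 ne02.symm ne23 ne03 hsplit14
    have E23 := exclude q1 q2 q0 q3 hQ1203 ne01 ne02 ne13.symm ne23.symm ne12 hsplit23
    have P1 : (∏ e : ↥(fullSplits T),
        (if (∑ i ∈ (e : Finset (Fin n)), gvec q0 q1 q2 q3 (1,1) (1,1) (1,1) (1,1) i) = 0 then 1 else a e)) =
        ∏ e : ↥(fullSplits T),
        (if (∑ i ∈ (e : Finset (Fin n)), gvec q0 q1 q2 q3 (1,0) (0,1) (1,0) (0,1) i) = 0 then 1 else a e) := by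
      apply Finset.prod_congr rfl
      intro e _
      refine if_congr ?_ rfl rfl
      rw [sum_gvec, sum_gvec]
      exact (bash_b (q0 ∈ (e : Finset (Fin n))) (q1 ∈ (e : Finset (Fin n)))
        (q2 ∈ (e : Finset (Fin n))) (q3 ∈ (e : Finset (Fin n)))
        (E12 e.1 e.2) (fun h => E34 e.1 e.2 ⟨h.2.2.1, h.2.2.2, h.1, h.2.1⟩) (fun h => E14 e.1 e.2 ⟨h.1, h.2.2.2, h.2.1, h.2.2.1⟩) (fun h => E23 e.1 e.2 ⟨h.2.1, h.2.2.1, h.1, h.2.2.2⟩)).1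
    have P2 : (∏ e : ↥(fullSplits T),
        (if (∑ i ∈ (e : Finset (Fin n)), gvec q0 q1 q2 q3 (1,0) (1,0) (0,1) (0,1) i) = 0 then 1 else a e)) =
        ∏ e : ↥(fullSplits T),
        (if (∑ i ∈ (e : Finset (Fin n)), gvec q0 q1 q2 q3 (1,0) (0,1) (0,1) (1,0) i) = 0 then 1 else a e) := by
      apply Finset.prod_congr rfl
      intro e _
      refine if_congr ?_ rfl rfl
      rw [sum_gvec, sum_gvec]
      exact (bash_b (q0 ∈ (e : Finset (Fin n))) (q1 ∈ (e : Finset (Fin n)))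
        (q2 ∈ (e : Finset (Fin n))) (q3 ∈ (e : Finset (Fin n)))
        (E12 e.1 e.2) (fun h => E34 e.1 e.2 ⟨h.2.2.1, h.2.2.2, h.1, h.2.1⟩) (fun h => E14 e.1 e.2 ⟨h.1, h.2.2.2, h.2.1, h.2.2.1⟩) (fun h => E23 e.1 e.2 ⟨h.2.1, h.2.2.1, h.1, h.2.2.2⟩)).2
    rw [P1, P2]
    ring

/-- if on some 4-element subset `Q` of the taxa the induced quartet tree of
`T3` differs from those of `T1` and `T2`, then for the JC model the image of `ψ_{T3}` is
not contained in the Zariski closure of the image of the mixture `ψ_{T1,T2}`. -/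
theorem jc_unmixed_not_in_mixture (n : ℕ) (hn : 4 ≤ n) (T1 T2 T3 : PhyloBinaryTree n)
    (Q : Finset (Fin n)) (hQ : Q.card = 4)
    (h1 : quartet T3 Q ≠ quartet T1 Q) (h2 : quartet T3 Q ≠ quartet T2 Q) :
    ∃ (s : ↥(fullSplits T3) → ℂ) (f : MvPolynomial (Fin n → Gp) ℂ),
      (∀ (a : ↥(fullSplits T1) → ℂ) (b : ↥(fullSplits T2) → ℂ) (pi : ℂ),
        MvPolynomial.eval (psiMixJC T1 T2 a b pi) f = 0) ∧
      MvPolynomial.eval (psiJC T3 s) f ≠ 0 := by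
  classical
  obtain ⟨A3, hA3, hA3card⟩ := resolve hn T3 Q hQ
  obtain ⟨q0, q1, ne01, hP3⟩ := Finset.card_eq_two.mp hA3card
  have hsdcard : (Q \ (A3 ∩ Q)).card = 2 := by
    rw [Finset.card_sdiff_of_subset Finset.inter_subset_right, hQ, hA3card]
  obtain ⟨q2, q3, ne23, hP3'⟩ := Finset.card_eq_two.mp hsdcard
  have hq0 : q0 ∈ A3 ∩ Q := by rw [hP3]; simp
  have hq1 : q1 ∈ A3 ∩ Q := by rw [hP3]; simp
  have hq2 : q2 ∈ Q \ (A3 ∩ Q) := by rw [hP3']; simp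
  have hq3 : q3 ∈ Q \ (A3 ∩ Q) := by rw [hP3']; simp
  have ne02 : q0 ≠ q2 := fun e => (Finset.mem_sdiff.mp hq2).2 (e ▸ hq0)
  have ne03 : q0 ≠ q3 := fun e => (Finset.mem_sdiff.mp hq3).2 (e ▸ hq0)
  have ne12 : q1 ≠ q2 := fun e => (Finset.mem_sdiff.mp hq2).2 (e ▸ hq1)
  have ne13 : q1 ≠ q3 := fun e => (Finset.mem_sdiff.mp hq3).2 (e ▸ hq1)
  have hQeq : Q = {q0, q1, q2, q3} := by
    have hu : (A3 ∩ Q) ∪ (Q \ (A3 ∩ Q)) = Q :=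
      Finset.union_sdiff_of_subset Finset.inter_subset_right
    rw [← hu, hP3', hP3]
    ext z
    simp only [Finset.mem_union, Finset.mem_insert, Finset.mem_singleton]
    tauto
  have hQ2301 : Q = {q2, q3, q0, q1} := by rw [hQeq]; ext z; simp; tauto
  have hA3pat := (trace_iff Q A3 q0 q1 q2 q3 hQeq ne02.symm ne12.symm ne03.symm ne13.symm).mp hP3
  have quartetT3 : quartet T3 Q = {A3 ∩ Q, Q \ (A3 ∩ Q)} := quartet_eq T3 Q hQ A3 hA3 hA3card
  have key1 : ∀ (T : PhyloBinaryTree n), quartet T3 Q ≠ quartet T Q →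
      ∀ e ∈ T.splits, e ∩ Q ≠ {q0, q1} ∧ e ∩ Q ≠ {q2, q3} := by
    intro T hT e he
    constructor <;> intro htr <;> apply hT
    · have hc2 : (e ∩ Q).card = 2 := by rw [htr, ← hP3]; exact hA3card
      rw [quartetT3, quartet_eq T Q hQ e he hc2, htr, ← hP3]
    · have hc2 : (e ∩ Q).card = 2 := by rw [htr, ← hP3']; exact hsdcard
      rw [quartetT3, quartet_eq T Q hQ e he hc2, htr, ← hP3',
        Finset.sdiff_sdiff_eq_self Finset.inter_subset_right]
      exact Set.pair_comm _ _
  set gt := gvec q0 q1 q2 q3 (1,1) (1,1) (1,1) (1,1) with hgt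
  set g1 := gvec q0 q1 q2 q3 (1,0) (1,0) (0,1) (0,1) with hg1
  set g2 := gvec q0 q1 q2 q3 (1,0) (0,1) (1,0) (0,1) with hg2
  set g3 := gvec q0 q1 q2 q3 (1,0) (0,1) (0,1) (1,0) with hg3
  set s : ↥(fullSplits T3) → ℂ := fun e =>
    if ((e : Finset (Fin n)) ∩ Q = {q0, q1} ∨ (e : Finset (Fin n)) ∩ Q = {q2, q3}) then 0 else 1
    with hs
  refine ⟨s, MvPolynomial.X gt + MvPolynomial.X g1 - MvPolynomial.X g2 - MvPolynomial.X g3, ?_, ?_⟩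
  · intro a b pi
    have v1 := vanish T1 Q hQ q0 q1 q2 q3 hQeq ne01 ne02 ne03 ne12 ne13 ne23 (key1 T1 h1) a
    have v2 := vanish T2 Q hQ q0 q1 q2 q3 hQeq ne01 ne02 ne03 ne12 ne13 ne23 (key1 T2 h2) b
    simp only [map_add, map_sub, MvPolynomial.eval_X, psiMixJC]
    rw [← hgt, ← hg1, ← hg2, ← hg3] at v1 v2
    linear_combination pi * v1 + (1 - pi) * v2
  · have hpsi : ∀ (v0 v1 v2 v3 : Gp), v0 + v1 + v2 + v3 = 0 →
        psiJC T3 s (gvec q0 q1 q2 q3 v0 v1 v2 v3) =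
        ∏ e : ↥(fullSplits T3),
          (if (∑ i ∈ (e : Finset (Fin n)), gvec q0 q1 q2 q3 v0 v1 v2 v3 i) = 0 then 1 else s e) := by
      intro v0 v1 v2 v3 hv
      simp only [psiJC]
      rw [if_pos (by rw [sum_gvec_univ]; exact hv)]
    have trace23 : ∀ (e : Finset (Fin n)), e ∩ Q = {q2, q3} →
        (q2 ∈ e ∧ q3 ∈ e ∧ q0 ∉ e ∧ q1 ∉ e) := by
      intro e he
      exact (trace_iff Q e q2 q3 q0 q1 hQ2301 ne02 ne03 ne12 ne13).mp he
    have trace01 : ∀ (e : Finset (Fin n)), e ∩ Q = {q0, q1} →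
        (q0 ∈ e ∧ q1 ∈ e ∧ q2 ∉ e ∧ q3 ∉ e) := by
      intro e he
      exact (trace_iff Q e q0 q1 q2 q3 hQeq ne02.symm ne12.symm ne03.symm ne13.symm).mp he
    have prod_one : ∀ (v0 v1 v2 v3 : Gp),
        (v0 + v1 = 0) → (v2 + v3 = 0) →
        (∏ e : ↥(fullSplits T3),
          (if (∑ i ∈ (e : Finset (Fin n)), gvec q0 q1 q2 q3 v0 v1 v2 v3 i) = 0 then 1 else s e)) = 1 := by
      intro v0 v1 v2 v3 h01 h23
      apply Finset.prod_eq_one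
      intro e _
      by_cases hz : (∑ i ∈ (e : Finset (Fin n)), gvec q0 q1 q2 q3 v0 v1 v2 v3 i) = 0
      · rw [if_pos hz]
      · rw [if_neg hz]
        rw [hs]
        simp only []
        rw [if_neg]
        rintro (h | h)
        · obtain ⟨m0, m1, m2, m3⟩ := trace01 _ h
          apply hz
          rw [sum_gvec, if_pos m0, if_pos m1, if_neg m2, if_neg m3, add_zero, add_zero]
          exact h01
        · obtain ⟨m2, m3, m0, m1⟩ := trace23 _ h
          apply hz
          rw [sum_gvec, if_neg m0, if_neg m1, if_pos m2, if_pos m3, zero_add, zero_add]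
          exact h23
    have prod_zero : ∀ (v0 v1 v2 v3 : Gp),
        ((if q0 ∈ A3 then v0 else 0) + (if q1 ∈ A3 then v1 else 0) +
         (if q2 ∈ A3 then v2 else 0) + (if q3 ∈ A3 then v3 else 0)) ≠ 0 →
        (∏ e : ↥(fullSplits T3),
          (if (∑ i ∈ (e : Finset (Fin n)), gvec q0 q1 q2 q3 v0 v1 v2 v3 i) = 0 then 1 else s e)) = 0 := by
      intro v0 v1 v2 v3 hnz
      apply Finset.prod_eq_zero
        (Finset.mem_univ (⟨A3, Finset.mem_union_left _ hA3⟩ : ↥(fullSplits T3)))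
      have hz : ¬ (∑ i ∈ A3, gvec q0 q1 q2 q3 v0 v1 v2 v3 i) = 0 := by
        rw [sum_gvec]; exact hnz
      rw [if_neg hz, hs]
      simp only []
      rw [if_pos (Or.inl hP3)]
    have e_t : psiJC T3 s gt = 1 := by
      rw [hgt, hpsi (1,1) (1,1) (1,1) (1,1) (by decide)]
      exact prod_one (1,1) (1,1) (1,1) (1,1) (by decide) (by decide)
    have e_1 : psiJC T3 s g1 = 1 := by
      rw [hg1, hpsi (1,0) (1,0) (0,1) (0,1) (by decide)]
      exact prod_one (1,0) (1,0) (0,1) (0,1) (by decide) (by decide)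
    have e_2 : psiJC T3 s g2 = 0 := by
      rw [hg2, hpsi (1,0) (0,1) (1,0) (0,1) (by decide)]
      apply prod_zero
      rw [if_pos hA3pat.1, if_pos hA3pat.2.1, if_neg hA3pat.2.2.1, if_neg hA3pat.2.2.2]
      decide
    have e_3 : psiJC T3 s g3 = 0 := by
      rw [hg3, hpsi (1,0) (0,1) (0,1) (1,0) (by decide)]
      apply prod_zero
      rw [if_pos hA3pat.1, if_pos hA3pat.2.1, if_neg hA3pat.2.2.1, if_neg hA3pat.2.2.2]
      decide
    simp only [map_add, map_sub, MvPolynomial.eval_X, e_t, e_1, e_2, e_3]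
    norm_num
end
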